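/- arXiv:1709.05153 — 6 statements merged into one kernel-verified Lean document; each statement's English description precedes it below -/
import Mathlib

section
/- Let μ be a finite measure on a measurable space M, let κ be a Markov kernel on M, and let ψ_1,…,ψ_N : M → ℝ be bounded measurable functions whose mass matrix M̄ is invertible. Write Kψ_i(x) = ∫ ψ_i(y) dκ(x)(y), define the N×N matrix T̄ by T̄_{ij} = ∫ (Kψ_i) ψ_j dμ, and set K̄ = T̄ M̄⁻¹. Then for every c ∈ ℝ^N and every d ∈ ℝ^N, ∫ (Σ_j (K̄ᵀ c)_j ψ_j − Σ_i c_i Kψ_i)² dμ ≤ ∫ (Σ_j d_j ψ_j − Σ_i c_i Kψ_i)² dμ; that is, the L²(μ)-projection of the function Σ_i c_i Kψ_i onto the span of ψ_1,…,ψ_N is the function Σ_j (K̄ᵀ c)_j ψ_j. -/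
open MeasureTheory Matrix ProbabilityTheory

/-- Theorem 2.4 of the paper. For a Markov kernel `κ` and bounded
measurable basis functions `ψ_1,…,ψ_N` with invertible mass matrix `M̄`, the matrix
`K̄ = T̄ M̄⁻¹` represents the `L²(μ)`-projection of the Koopman operator onto the span of
the basis functions: `Σ_j (K̄ᵀ c)_j ψ_j` is the best `L²(μ)` approximation of
`Σ_i c_i Kψ_i`. -/
theorem stmt_1 {M : Type*} [MeasurableSpace M] (μ : Measure M) [IsFiniteMeasure μ]
    (κ : Kernel M M) [IsMarkovKernel κ] (N : ℕ)
    (ψ : Fin N → M → ℝ)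
    (hψ_meas : ∀ i, Measurable (ψ i))
    (hψ_bdd : ∀ i, ∃ C : ℝ, ∀ x, |ψ i x| ≤ C)
    (Kψ : Fin N → M → ℝ)
    (hKψ : ∀ i x, Kψ i x = ∫ y, ψ i y ∂(κ x))
    (Mbar Tbar Kbar : Matrix (Fin N) (Fin N) ℝ)
    (hMbar : ∀ i j, Mbar i j = ∫ x, ψ i x * ψ j x ∂μ)
    (hMbar_inv : IsUnit Mbar)
    (hTbar : ∀ i j, Tbar i j = ∫ x, Kψ i x * ψ j x ∂μ)
    (hKbar : Kbar = Tbar * Mbar⁻¹) :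
    ∀ c d : Fin N → ℝ,
      (∫ x, (∑ j, (Kbarᵀ *ᵥ c) j * ψ j x - ∑ i, c i * Kψ i x) ^ 2 ∂μ)
        ≤ ∫ x, (∑ j, d j * ψ j x - ∑ i, c i * Kψ i x) ^ 2 ∂μ := by
  intro c d
  -- bounds on the basis functions
  choose C0 hC0 using hψ_bdd
  set C : Fin N → ℝ := fun i => max (C0 i) 0 with hCdef
  have hCnn : ∀ i, 0 ≤ C i := fun i => le_max_right _ _
  have hψb : ∀ i x, |ψ i x| ≤ C i := fun i x => (hC0 i x).trans (le_max_left _ _)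
  -- Kψ is measurable and bounded
  have hKψ_meas : ∀ i, Measurable (Kψ i) := by
    intro i
    have : StronglyMeasurable fun x => ∫ y, ψ i y ∂(κ x) :=
      ((hψ_meas i).comp measurable_snd).stronglyMeasurable.integral_kernel_prod_right'
    have := this.measurable
    simpa [funext fun x => (hKψ i x).symm] using this
  have hKψb : ∀ i x, |Kψ i x| ≤ C i := by
    intro i x
    rw [hKψ]
    have h := norm_integral_le_of_norm_le_const (μ := κ x) (C := C i) (f := ψ i)
      (Filter.Eventually.of_forall fun y => by simpa using hψb i y)
    simpa [measure_univ] using h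
  -- integrability of products of bounded measurable functions
  have hIntMul : ∀ (p q : M → ℝ) (Bp Bq : ℝ), Measurable p → Measurable q →
      (∀ x, |p x| ≤ Bp) → (∀ x, |q x| ≤ Bq) → Integrable (fun x => p x * q x) μ := by
    intro p q Bp Bq hp hq hbp hbq
    refine (integrable_const (Bp * Bq)).mono' (hp.mul hq).aestronglyMeasurable
      (Filter.Eventually.of_forall fun x => ?_)
    have h0 : (0:ℝ) ≤ Bp := (abs_nonneg _).trans (hbp x)
    simpa [abs_mul] using mul_le_mul (hbp x) (hbq x) (abs_nonneg _) h0
  -- the approximating functions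
  set a : Fin N → ℝ := Kbarᵀ *ᵥ c with ha
  set g : (Fin N → ℝ) → M → ℝ := fun v x => ∑ j, v j * ψ j x with hg
  set f : M → ℝ := fun x => ∑ i, c i * Kψ i x with hf
  have hgmeas : ∀ v, Measurable (g v) := fun v =>
    Finset.measurable_sum _ fun j _ => (hψ_meas j).const_mul _
  have hfmeas : Measurable f :=
    Finset.measurable_sum _ fun i _ => (hKψ_meas i).const_mul _
  have habs : ∀ (v : Fin N → ℝ) (φ : Fin N → M → ℝ), (∀ i x, |φ i x| ≤ C i) →
      ∀ x, |∑ j, v j * φ j x| ≤ ∑ j, |v j| * C j := by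
    intro v φ hφ x
    calc |∑ j, v j * φ j x| ≤ ∑ j, |v j * φ j x| := Finset.abs_sum_le_sum_abs _ _
      _ ≤ ∑ j, |v j| * C j := Finset.sum_le_sum fun j _ => by
            rw [abs_mul]; exact mul_le_mul_of_nonneg_left (hφ j x) (abs_nonneg _)
  have hgb : ∀ v x, |g v x| ≤ ∑ j, |v j| * C j := fun v => habs v ψ hψb
  have hfb : ∀ x, |f x| ≤ ∑ i, |c i| * C i := habs c Kψ hKψb
  -- residual r = g a - f  and difference e = g d - g a
  set r : M → ℝ := fun x => g a x - f x with hr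
  have hrmeas : Measurable r := (hgmeas a).sub hfmeas
  set Br : ℝ := (∑ j, |a j| * C j) + ∑ i, |c i| * C i with hBr
  have hrb : ∀ x, |r x| ≤ Br := fun x =>
    (abs_sub (g a x) (f x)).trans (add_le_add (hgb a x) (hfb x))
  -- Kbar * Mbar = Tbar
  have hKM : Kbar * Mbar = Tbar := by
    rw [hKbar, Matrix.mul_assoc,
      Matrix.nonsing_inv_mul Mbar ((Matrix.isUnit_iff_isUnit_det Mbar).mp hMbar_inv),
      Matrix.mul_one]
  -- orthogonality: ∫ r ψ_j = 0
  have orth : ∀ j, ∫ x, r x * ψ j x ∂μ = 0 := by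
    intro j
    have hint1 : ∀ k : Fin N, Integrable (fun x => a k * (ψ k x * ψ j x)) μ :=
      fun k => (hIntMul (ψ k) (ψ j) (C k) (C j) (hψ_meas k) (hψ_meas j) (hψb k) (hψb j)).const_mul _
    have hint2 : ∀ i : Fin N, Integrable (fun x => c i * (Kψ i x * ψ j x)) μ :=
      fun i => (hIntMul (Kψ i) (ψ j) (C i) (C j) (hKψ_meas i) (hψ_meas j) (hKψb i) (hψb j)).const_mul _
    have e1 : ∫ x, g a x * ψ j x ∂μ = ∑ k, a k * Mbar k j := by
      have : (fun x => g a x * ψ j x) = fun x => ∑ k, a k * (ψ k x * ψ j x) := by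
        funext x; simp only [hg, Finset.sum_mul, mul_assoc]
      rw [this, integral_finset_sum _ fun k _ => hint1 k]
      exact Finset.sum_congr rfl fun k _ => by rw [integral_const_mul, hMbar]
    have e2 : ∫ x, f x * ψ j x ∂μ = ∑ i, c i * Tbar i j := by
      have : (fun x => f x * ψ j x) = fun x => ∑ i, c i * (Kψ i x * ψ j x) := by
        funext x; simp only [hf, Finset.sum_mul, mul_assoc]
      rw [this, integral_finset_sum _ fun i _ => hint2 i]
      exact Finset.sum_congr rfl fun i _ => by rw [integral_const_mul, hTbar]
    have hsub : (fun x => r x * ψ j x) = fun x => g a x * ψ j x - f x * ψ j x := by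
      funext x; rw [hr]; ring
    have hint1' : Integrable (fun x => g a x * ψ j x) μ :=
      hIntMul (g a) (ψ j) _ (C j) (hgmeas a) (hψ_meas j) (hgb a) (hψb j)
    have hint2' : Integrable (fun x => f x * ψ j x) μ :=
      hIntMul f (ψ j) _ (C j) hfmeas (hψ_meas j) hfb (hψb j)
    rw [hsub, integral_sub hint1' hint2', e1, e2]
    -- matrix identity
    have h1 : (a ᵥ* Mbar) j = (c ᵥ* Tbar) j := by
      rw [ha, Matrix.mulVec_transpose, Matrix.vecMul_vecMul, hKM]
    have h2 : (a ᵥ* Mbar) j = ∑ k, a k * Mbar k j := by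
      simp [Matrix.vecMul, dotProduct]
    have h3 : (c ᵥ* Tbar) j = ∑ i, c i * Tbar i j := by
      simp [Matrix.vecMul, dotProduct]
    rw [← h2, ← h3, h1, sub_self]
  -- cross term vanishes
  set e : M → ℝ := fun x => g d x - g a x with he
  have hemeas : Measurable e := (hgmeas d).sub (hgmeas a)
  set Be : ℝ := (∑ j, |d j| * C j) + ∑ j, |a j| * C j with hBe
  have heb : ∀ x, |e x| ≤ Be := fun x =>
    (abs_sub (g d x) (g a x)).trans (add_le_add (hgb d x) (hgb a x))
  have cross : ∫ x, e x * r x ∂μ = 0 := by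
    have hrw : (fun x => e x * r x) = fun x => ∑ j, (d j - a j) * (ψ j x * r x) := by
      funext x
      simp only [he, hg, ← Finset.sum_sub_distrib, ← sub_mul, Finset.sum_mul, mul_assoc]
    have hint : ∀ j : Fin N, Integrable (fun x => (d j - a j) * (ψ j x * r x)) μ :=
      fun j => (hIntMul (ψ j) r (C j) Br (hψ_meas j) hrmeas (hψb j) hrb).const_mul _
    rw [hrw, integral_finset_sum _ fun j _ => hint j]
    refine Finset.sum_eq_zero fun j _ => ?_
    rw [integral_const_mul]
    have : ∫ x, ψ j x * r x ∂μ = ∫ x, r x * ψ j x ∂μ := by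
      congr 1; funext x; ring
    rw [this, orth j, mul_zero]
  -- main decomposition
  have hexp : (fun x => (∑ j, d j * ψ j x - ∑ i, c i * Kψ i x) ^ 2)
      = fun x => r x ^ 2 + (e x ^ 2 + 2 * (e x * r x)) := by
    funext x
    have : (∑ j, d j * ψ j x) - ∑ i, c i * Kψ i x = e x + r x := by
      simp only [he, hr, hg, hf]; ring
    rw [this]; ring
  have hIr2 : Integrable (fun x => r x ^ 2) μ := by
    have := hIntMul r r Br Br hrmeas hrmeas hrb hrb
    simpa [sq] using this
  have hIe2 : Integrable (fun x => e x ^ 2) μ := by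
    have := hIntMul e e Be Be hemeas hemeas heb heb
    simpa [sq] using this
  have hIer : Integrable (fun x => e x * r x) μ :=
    hIntMul e r Be Br hemeas hrmeas heb hrb
  have hLHS : (fun x => (∑ j, (Kbarᵀ *ᵥ c) j * ψ j x - ∑ i, c i * Kψ i x) ^ 2)
      = fun x => r x ^ 2 := by
    funext x; simp only [hr, hg, hf, ha]
  have hIg : Integrable (fun x => e x ^ 2 + 2 * (e x * r x)) μ := by
    have := hIe2.add (hIer.const_mul 2)
    exact this
  have hIcr : Integrable (fun x => 2 * (e x * r x)) μ := hIer.const_mul 2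
  have hsum : ∫ x, (r x ^ 2 + (e x ^ 2 + 2 * (e x * r x))) ∂μ
      = (∫ x, r x ^ 2 ∂μ) + ((∫ x, e x ^ 2 ∂μ) + ∫ x, 2 * (e x * r x) ∂μ) := by
    rw [integral_add hIr2 hIg, integral_add hIe2 hIcr]
  rw [hLHS, hexp, hsum, integral_const_mul, cross, mul_zero, add_zero]
  have : 0 ≤ ∫ x, e x ^ 2 ∂μ := integral_nonneg fun x => sq_nonneg _
  linarith
end

section
/- Let M be a measurable space, F : M → M a map, x_1,…,x_T points of M, and ψ_1,…,ψ_N : M → ℝ functions such that each ψ_i and each ψ_i ∘ F is measurable. Let Ψ_X and Ψ_Y be the N×T matrices with entries (Ψ_X)_{ij} = ψ_i(x_j) and (Ψ_Y)_{ij} = ψ_i(F(x_j)), and assume Ψ_X Ψ_Xᵀ is invertible. Let μ_T be the empirical measure of x_1,…,x_T, let M̄ be the mass matrix of ψ_1,…,ψ_N with respect to μ_T, and define T̄ by T̄_{ij} = ∫ ψ_i(F(x)) ψ_j(x) dμ_T(x). Then T̄ M̄⁻¹ = Ψ_Y Ψ_Xᵀ (Ψ_X Ψ_Xᵀ)⁻¹.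 -/
open MeasureTheory Matrix ENNReal

/-- Proposition 2.6 of the paper. For a deterministic system `x ↦ F x`,
the matrix representation `T̄ M̄⁻¹` of the projected Koopman operator with respect to the
empirical measure equals the EDMD matrix `Ψ_Y Ψ_Xᵀ (Ψ_X Ψ_Xᵀ)⁻¹`. -/
theorem stmt_3 {M : Type*} [MeasurableSpace M] (F : M → M) (T : ℕ) (hT : 0 < T)
    (x : Fin T → M) (N : ℕ) (ψ : Fin N → M → ℝ)
    (hψ_meas : ∀ i, Measurable (ψ i))
    (hψF_meas : ∀ i, Measurable (ψ i ∘ F))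
    (ΨX ΨY : Matrix (Fin N) (Fin T) ℝ)
    (hΨX : ∀ i j, ΨX i j = ψ i (x j))
    (hΨY : ∀ i j, ΨY i j = ψ i (F (x j)))
    (hinv : IsUnit (ΨX * ΨXᵀ))
    (μT : Measure M)
    (hμT : μT = (T : ℝ≥0∞)⁻¹ • ∑ j : Fin T, Measure.dirac (x j))
    (Mbar Tbar : Matrix (Fin N) (Fin N) ℝ)
    (hMbar : ∀ i j, Mbar i j = ∫ y, ψ i y * ψ j y ∂μT)
    (hTbar : ∀ i j, Tbar i j = ∫ y, ψ i (F y) * ψ j y ∂μT) :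
    Tbar * Mbar⁻¹ = ΨY * ΨXᵀ * (ΨX * ΨXᵀ)⁻¹ := by
  have hT0 : (T : ℝ) ≠ 0 := Nat.cast_ne_zero.mpr hT.ne'
  have key : ∀ (f : M → ℝ), Measurable f →
      ∫ y, f y ∂μT = (T : ℝ)⁻¹ * ∑ j : Fin T, f (x j) := by
    intro f hf
    rw [hμT, integral_smul_measure, integral_finset_sum_measure
      (fun j _ => (integrable_const (f (x j))).congr (ae_eq_dirac' hf).symm)]
    simp [integral_dirac' f _ hf.stronglyMeasurable, toReal_inv]
  have hM : Mbar = (T : ℝ)⁻¹ • (ΨX * ΨXᵀ) := by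
    ext i j
    rw [hMbar, key (fun y => ψ i y * ψ j y) ((hψ_meas i).mul (hψ_meas j))]
    simp [Matrix.mul_apply, hΨX, smul_eq_mul]
  have hTb : Tbar = (T : ℝ)⁻¹ • (ΨY * ΨXᵀ) := by
    ext i j
    rw [hTbar, key (fun y => ψ i (F y) * ψ j y) ((hψF_meas i).mul (hψ_meas j))]
    simp [Matrix.mul_apply, hΨX, hΨY, smul_eq_mul]
  have hdet : IsUnit (ΨX * ΨXᵀ).det := (isUnit_iff_isUnit_det _).mp hinv
  have : Invertible ((T : ℝ)⁻¹) := invertibleOfNonzero (inv_ne_zero hT0)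
  have hs : ((T : ℝ)⁻¹ • (ΨX * ΨXᵀ))⁻¹ = ⅟((T : ℝ)⁻¹) • (ΨX * ΨXᵀ)⁻¹ :=
    Matrix.inv_smul (A := ΨX * ΨXᵀ) ((T : ℝ)⁻¹) hdet
  rw [hM, hTb, hs, Matrix.smul_mul, Matrix.mul_smul, smul_smul,
    mul_invOf_self, one_smul]
end

section
/- Let M be a measurable space, κ a Markov kernel on M, and ψ_1,…,ψ_N : M → ℝ bounded measurable functions; write Kψ_i(x) = ∫ ψ_i(y) dκ(x)(y) and K(ψ_i²)(x) = ∫ ψ_i(y)² dκ(x)(y). On a probability space let (X_k, Y_k), k = 1,…,T, be mutually independent M×M-valued random pairs such that each pair (X_k, Y_k) has transition kernel κ, and let ν_k denote the law of X_k. Assume there exists γ̃ ≥ 0 such that ∫ ψ_j(x)² (K(ψ_i²)(x) − (Kψ_i(x))²) dν_k(x) ≤ γ̃ for all indices i, j and all k. Define the random N×N matrices K̂_T with entries (1/T) Σ_{k=1}^T ψ_i(Y_k) ψ_j(X_k) and K_T with entries (1/T) Σ_{k=1}^T (Kψ_i)(X_k) ψ_j(X_k). Then E[‖K_T − K̂_T‖_F²]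 ≤ N² γ̃ / T. -/
open MeasureTheory ProbabilityTheory Matrix

/-- The squared Frobenius norm of a real matrix. -/
noncomputable def frobeniusNormSq {m n : Type*} [Fintype m] [Fintype n]
    (A : Matrix m n ℝ) : ℝ :=
  ∑ i, ∑ j, (A i j) ^ 2

/-- A bounded a.e. strongly measurable function is integrable w.r.t. a finite measure. -/
lemma integrable_of_abs_le {α : Type*} [MeasurableSpace α] {μ : Measure α}
    [IsFiniteMeasure μ] {f : α → ℝ} (hf : AEStronglyMeasurable f μ) {C : ℝ}
    (h : ∀ x, |f x| ≤ C) : Integrable f μ :=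
  (integrable_const C).mono' hf
    (Filter.Eventually.of_forall fun x => by simpa [Real.norm_eq_abs] using h x)

/-- equation 2.18 of the paper, independent-data case. The mean-square
Frobenius distance between the data-driven matrix `K̂_T` and the Koopman stiffness matrix
`K_T` is bounded by `N² γ̃ / T`. -/
theorem stmt_8 {M : Type*} [MeasurableSpace M]
    (κ : Kernel M M) [IsMarkovKernel κ] (N : ℕ)
    (ψ : Fin N → M → ℝ)
    (hψ_meas : ∀ i, Measurable (ψ i))
    (hψ_bdd : ∀ i, ∃ C : ℝ, ∀ x, |ψ i x| ≤ C)
    (Kψ Kψ2 : Fin N → M → ℝ)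
    (hKψ : ∀ i x, Kψ i x = ∫ y, ψ i y ∂(κ x))
    (hKψ2 : ∀ i x, Kψ2 i x = ∫ y, (ψ i y) ^ 2 ∂(κ x))
    {Ω : Type*} [MeasurableSpace Ω] (P : Measure Ω) [IsProbabilityMeasure P]
    (T : ℕ) (hT : 0 < T) (X Y : Fin T → Ω → M)
    (hX_meas : ∀ k, Measurable (X k)) (hY_meas : ∀ k, Measurable (Y k))
    (hindep : iIndepFun
      (fun k ω => (X k ω, Y k ω)) P)
    (hlaw : ∀ k, Measure.map (fun ω => (X k ω, Y k ω)) P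
      = (Measure.map (X k) P) ⊗ₘ κ)
    (γ' : ℝ) (hγ' : 0 ≤ γ')
    (hbound : ∀ i j k,
      (∫ x, ψ j x ^ 2 * (Kψ2 i x - (Kψ i x) ^ 2) ∂(Measure.map (X k) P)) ≤ γ')
    (Khat KT : Ω → Matrix (Fin N) (Fin N) ℝ)
    (hKhat : ∀ ω i j, Khat ω i j = (T : ℝ)⁻¹ * ∑ k, ψ i (Y k ω) * ψ j (X k ω))
    (hKT : ∀ ω i j, KT ω i j = (T : ℝ)⁻¹ * ∑ k, Kψ i (X k ω) * ψ j (X k ω)) :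
    (∫ ω, frobeniusNormSq (KT ω - Khat ω) ∂P) ≤ (N : ℝ) ^ 2 * γ' / T := by
  -- uniform bounds
  choose C0 hC0 using hψ_bdd
  set C : Fin N → ℝ := fun i => max (C0 i) 0 with hCdef
  have hC : ∀ i x, |ψ i x| ≤ C i := fun i x => (hC0 i x).trans (le_max_left _ _)
  have hCnn : ∀ i, 0 ≤ C i := fun i => le_max_right _ _
  -- measurability and boundedness of Kψ
  have hKψ_meas : ∀ i, Measurable (Kψ i) := by
    intro i
    have h : StronglyMeasurable fun x : M => ∫ y, ψ i y ∂(κ x) :=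
      StronglyMeasurable.integral_kernel_prod_right (f := fun _ y => ψ i y)
        ((hψ_meas i).comp measurable_snd).stronglyMeasurable
    have : Kψ i = fun x => ∫ y, ψ i y ∂(κ x) := funext fun x => hKψ i x
    rw [this]; exact h.measurable
  have hKψ_bdd : ∀ i x, |Kψ i x| ≤ C i := by
    intro i x
    rw [hKψ]
    have := norm_integral_le_of_norm_le_const (μ := κ x) (f := ψ i) (C := C i)
      (Filter.Eventually.of_forall fun y => by simpa [Real.norm_eq_abs] using hC i y)
    simpa [Real.norm_eq_abs, measure_univ] using this
  -- laws of X k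
  set ν : Fin T → Measure M := fun k => Measure.map (X k) P with hνdef
  haveI hνprob : ∀ k, IsProbabilityMeasure (ν k) :=
    fun k => Measure.isProbabilityMeasure_map (hX_meas k).aemeasurable
  -- the centered integrand
  set g : Fin N → Fin N → M × M → ℝ :=
    fun i j p => (Kψ i p.1 - ψ i p.2) * ψ j p.1 with hgdef
  have hg_meas : ∀ i j, Measurable (g i j) := fun i j =>
    (((hKψ_meas i).comp measurable_fst).sub ((hψ_meas i).comp measurable_snd)).mul
      ((hψ_meas j).comp measurable_fst)
  have hg_bdd : ∀ i j p, |g i j p| ≤ 2 * C i * C j := by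
    intro i j p
    have h1 : |Kψ i p.1 - ψ i p.2| ≤ 2 * C i := by
      calc |Kψ i p.1 - ψ i p.2| ≤ |Kψ i p.1| + |ψ i p.2| := abs_sub _ _
        _ ≤ C i + C i := add_le_add (hKψ_bdd i _) (hC i _)
        _ = 2 * C i := by ring
    calc |g i j p| = |Kψ i p.1 - ψ i p.2| * |ψ j p.1| := abs_mul _ _
      _ ≤ (2 * C i) * C j :=
          mul_le_mul h1 (hC j _) (abs_nonneg _) (by positivity)
  set Z : Fin N → Fin N → Fin T → Ω → ℝ :=
    fun i j k ω => g i j (X k ω, Y k ω) with hZdef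
  have hpair : ∀ k, Measurable fun ω => (X k ω, Y k ω) :=
    fun k => (hX_meas k).prodMk (hY_meas k)
  have hZ_meas : ∀ i j k, Measurable (Z i j k) := fun i j k => (hg_meas i j).comp (hpair k)
  have hZ_bdd : ∀ i j k ω, |Z i j k ω| ≤ 2 * C i * C j := fun i j k ω => hg_bdd i j _
  -- transfer of integrals to the kernel
  have key : ∀ (i j : Fin N) (k : Fin T) (F : ℝ → ℝ) (D : ℝ), Measurable F →
      (∀ p, |F (g i j p)| ≤ D) →
      ∫ ω, F (Z i j k ω) ∂P = ∫ x, ∫ y, F (g i j (x, y)) ∂(κ x) ∂(ν k) := by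
    intro i j k F D hF hD
    have hmeas : Measurable fun p => F (g i j p) := hF.comp (hg_meas i j)
    haveI := hνprob k
    have hint : Integrable (fun p => F (g i j p)) (ν k ⊗ₘ κ) :=
      integrable_of_abs_le hmeas.aestronglyMeasurable hD
    have hmap := integral_map (φ := fun ω => (X k ω, Y k ω)) (hpair k).aemeasurable
      (f := fun p => F (g i j p))
      (by rw [hlaw k]; exact hmeas.aestronglyMeasurable)
    rw [hlaw k] at hmap
    calc ∫ ω, F (Z i j k ω) ∂P
        = ∫ p, F (g i j p) ∂(ν k ⊗ₘ κ) := hmap.symm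
      _ = ∫ x, ∫ y, F (g i j (x, y)) ∂(κ x) ∂(ν k) := Measure.integral_compProd hint
  -- mean zero
  have hmean : ∀ i j k, ∫ ω, Z i j k ω ∂P = 0 := by
    intro i j k
    have h := key i j k id (2 * C i * C j) measurable_id (fun p => hg_bdd i j p)
    simp only [id] at h
    rw [h]
    have hinner : ∀ x, ∫ y, g i j (x, y) ∂(κ x) = 0 := by
      intro x
      have hint1 : Integrable (ψ i) (κ x) :=
        integrable_of_abs_le (hψ_meas i).aestronglyMeasurable (hC i)
      have hrw : (fun y => g i j (x, y))
          = fun y => (Kψ i x * ψ j x) - (ψ i y * ψ j x) := by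
        funext y; simp only [hgdef]; ring
      rw [hrw, integral_sub (integrable_const _) (hint1.mul_const _),
        integral_const, integral_mul_const, ← hKψ]
      simp [measure_univ]
    simp [hinner]
  -- second moment
  have hsq : ∀ i j k, ∫ ω, (Z i j k ω) ^ 2 ∂P ≤ γ' := by
    intro i j k
    have habs : ∀ p, |(g i j p) ^ 2| ≤ (2 * C i * C j) ^ 2 := by
      intro p
      rw [abs_pow, ← sq_abs]
      exact pow_le_pow_left₀ (abs_nonneg _) (by simpa using hg_bdd i j p) 2
    have h := key i j k (fun t => t ^ 2) ((2 * C i * C j) ^ 2)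
      (measurable_id.pow_const 2) habs
    rw [h]
    have hinner : ∀ x, ∫ y, (g i j (x, y)) ^ 2 ∂(κ x)
        = ψ j x ^ 2 * (Kψ2 i x - Kψ i x ^ 2) := by
      intro x
      have hint1 : Integrable (ψ i) (κ x) :=
        integrable_of_abs_le (hψ_meas i).aestronglyMeasurable (hC i)
      have hint2 : Integrable (fun y => (ψ i y) ^ 2) (κ x) := by
        refine integrable_of_abs_le ((hψ_meas i).pow_const 2).aestronglyMeasurable
          (C := C i ^ 2) (fun y => ?_)
        rw [abs_pow, ← sq_abs]
        exact pow_le_pow_left₀ (abs_nonneg _) (by simpa using hC i y) 2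
      have hrw : (fun y => (g i j (x, y)) ^ 2)
          = fun y => (ψ j x ^ 2 * Kψ i x ^ 2
            + (-(2 * Kψ i x * ψ j x ^ 2)) * ψ i y)
            + ψ j x ^ 2 * (ψ i y) ^ 2 := by
        funext y; simp only [hgdef]; ring
      rw [hrw, integral_add (f := fun y => ψ j x ^ 2 * Kψ i x ^ 2
            + (-(2 * Kψ i x * ψ j x ^ 2)) * ψ i y)
          (g := fun y => ψ j x ^ 2 * (ψ i y) ^ 2)
          ((integrable_const _).add (hint1.const_mul _)) (hint2.const_mul _),
        integral_add (f := fun _ => ψ j x ^ 2 * Kψ i x ^ 2)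
          (g := fun y => (-(2 * Kψ i x * ψ j x ^ 2)) * ψ i y)
          (integrable_const _) (hint1.const_mul _),
        integral_const, integral_const_mul, integral_const_mul, ← hKψ, ← hKψ2]
      simp only [probReal_univ, ENNReal.toReal_one, one_smul]
      ring
    simp only [hinner]
    exact hbound i j k
  -- zero cross terms by independence
  have hcross : ∀ i j (k l : Fin T), k ≠ l →
      ∫ ω, Z i j k ω * Z i j l ω ∂P = 0 := by
    intro i j k l hkl
    have h := (hindep.indepFun hkl).comp (hg_meas i j) (hg_meas i j)
    have h2 := h.integral_mul_eq_mul_integral (hZ_meas i j k).aestronglyMeasurable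
      (hZ_meas i j l).aestronglyMeasurable
    calc ∫ ω, Z i j k ω * Z i j l ω ∂P
        = (∫ ω, Z i j k ω ∂P) * ∫ ω, Z i j l ω ∂P := h2
      _ = 0 := by rw [hmean, hmean, mul_zero]
  -- variance-of-sum bound
  have hZint : ∀ i j (k l : Fin T), Integrable (fun ω => Z i j k ω * Z i j l ω) P := by
    intro i j k l
    refine integrable_of_abs_le ((hZ_meas i j k).mul (hZ_meas i j l)).aestronglyMeasurable
      (C := (2 * C i * C j) * (2 * C i * C j)) (fun ω => ?_)
    rw [abs_mul]
    exact mul_le_mul (hZ_bdd i j k ω) (hZ_bdd i j l ω) (abs_nonneg _) (by positivity)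
  have hsum : ∀ i j, ∫ ω, (∑ k, Z i j k ω) ^ 2 ∂P ≤ T * γ' := by
    intro i j
    have expand : ∀ ω : Ω, (∑ k, Z i j k ω) ^ 2 = ∑ k, ∑ l, Z i j k ω * Z i j l ω := by
      intro ω; rw [sq, Finset.sum_mul_sum]
    calc ∫ ω, (∑ k, Z i j k ω) ^ 2 ∂P
        = ∑ k, ∑ l, ∫ ω, Z i j k ω * Z i j l ω ∂P := by
          simp_rw [expand]
          rw [integral_finset_sum _
            (fun k _ => integrable_finset_sum _ (fun l _ => hZint i j k l))]
          exact Finset.sum_congr rfl fun k _ =>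
            integral_finset_sum _ fun l _ => hZint i j k l
      _ = ∑ k : Fin T, ∫ ω, (Z i j k ω) ^ 2 ∂P := by
          refine Finset.sum_congr rfl fun k _ => ?_
          rw [Finset.sum_eq_single k]
          · simp [sq]
          · intro l _ hlk; exact hcross i j k l (Ne.symm hlk)
          · simp
      _ ≤ ∑ _k : Fin T, γ' := Finset.sum_le_sum fun k _ => hsq i j k
      _ = T * γ' := by simp [Finset.sum_const, nsmul_eq_mul]
  -- rewrite the matrix difference
  have hdiff : ∀ ω i j, (KT ω - Khat ω) i j = (T : ℝ)⁻¹ * ∑ k, Z i j k ω := by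
    intro ω i j
    rw [Matrix.sub_apply, hKT, hKhat, ← mul_sub, ← Finset.sum_sub_distrib]
    congr 1
    refine Finset.sum_congr rfl fun k _ => ?_
    simp only [hZdef, hgdef]; ring
  have hint_sq : ∀ i j, Integrable (fun ω => (∑ k, Z i j k ω) ^ 2) P := by
    intro i j
    refine integrable_of_abs_le
      ((Finset.measurable_sum Finset.univ (fun k _ => hZ_meas i j k)).pow_const
        2).aestronglyMeasurable (C := ((T : ℝ) * (2 * C i * C j)) ^ 2) (fun ω => ?_)
    rw [abs_pow, ← sq_abs]
    refine pow_le_pow_left₀ (abs_nonneg _) ?_ 2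
    rw [abs_abs]
    calc |∑ k, Z i j k ω| ≤ ∑ k, |Z i j k ω| := Finset.abs_sum_le_sum_abs _ _
      _ ≤ ∑ _k : Fin T, (2 * C i * C j) := Finset.sum_le_sum fun k _ => hZ_bdd i j k ω
      _ = (T : ℝ) * (2 * C i * C j) := by simp [Finset.sum_const, nsmul_eq_mul]
  have hTpos : (0 : ℝ) < (T : ℝ) := by exact_mod_cast hT
  calc ∫ ω, frobeniusNormSq (KT ω - Khat ω) ∂P
      = ∑ i, ∑ j, ((T : ℝ)⁻¹) ^ 2 * ∫ ω, (∑ k, Z i j k ω) ^ 2 ∂P := by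
        have hfsq : ∀ ω, frobeniusNormSq (KT ω - Khat ω)
            = ∑ i, ∑ j, ((T : ℝ)⁻¹) ^ 2 * (∑ k, Z i j k ω) ^ 2 := by
          intro ω
          unfold frobeniusNormSq
          refine Finset.sum_congr rfl fun i _ => Finset.sum_congr rfl fun j _ => ?_
          rw [hdiff, mul_pow]
        simp_rw [hfsq]
        rw [integral_finset_sum _ fun i _ =>
          integrable_finset_sum _ fun j _ => (hint_sq i j).const_mul _]
        refine Finset.sum_congr rfl fun i _ => ?_
        rw [integral_finset_sum _ fun j _ => (hint_sq i j).const_mul _]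
        exact Finset.sum_congr rfl fun j _ => integral_const_mul _ _
    _ ≤ ∑ _i : Fin N, ∑ _j : Fin N, ((T : ℝ)⁻¹) ^ 2 * ((T : ℝ) * γ') := by
        refine Finset.sum_le_sum fun i _ => Finset.sum_le_sum fun j _ => ?_
        exact mul_le_mul_of_nonneg_left (hsum i j) (by positivity)
    _ = (N : ℝ) ^ 2 * γ' / T := by
        simp only [Finset.sum_const, Finset.card_univ, Fintype.card_fin, nsmul_eq_mul]
        field_simp
end

section
/- Let μ be a measure on a measurable space M and let ψ_1,…,ψ_N : M → ℝ be measurable, μ-square-integrable functions whose mass matrix M̄ is invertible. Let G be a real N×N matrix, let t ≥ 0, and suppose φ_1,…,φ_N : M → ℝ are measurable μ-square-integrable functions satisfying φ_i = Σ_{j=1}^N (exp(t • G))_{ij} ψ_j μ-almost everywhere for each i. Define the N×N matrices T̄ by T̄_{ij} = ∫ φ_i ψ_j dμ and L̄ by L̄_{ij} = ∫ (Σ_{k=1}^N G_{ik} ψ_k) ψ_j dμ. Then T̄ M̄⁻¹ = exp(t • (L̄ M̄⁻¹)). -/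
open MeasureTheory Matrix

lemma integrable_mul_L2 {M : Type*} [MeasurableSpace M] {μ : Measure M} {f g : M → ℝ}
    (hf : MemLp f 2 μ) (hg : MemLp g 2 μ) : Integrable (fun x => f x * g x) μ := by
  rw [← memLp_one_iff_integrable]
  have : MemLp (f • g) 1 μ := hg.smul hf
  exact this

/-- equation 2.30 of Theorem 2.13. If the time-`t` Koopman images
`φ_i` of the basis functions satisfy `φ_i = Σ_j (exp(t G))_{ij} ψ_j` μ-a.e., then the
projected Koopman matrix `T̄ M̄⁻¹` equals `exp(t (L̄ M̄⁻¹))`, where `L̄` is the generator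
stiffness matrix. -/
theorem stmt_11 {M : Type*} [MeasurableSpace M] (μ : Measure M) (N : ℕ)
    (ψ : Fin N → M → ℝ)
    (hψ_meas : ∀ i, Measurable (ψ i))
    (hψ_L2 : ∀ i, MemLp (ψ i) 2 μ)
    (Mbar : Matrix (Fin N) (Fin N) ℝ)
    (hMbar : ∀ i j, Mbar i j = ∫ x, ψ i x * ψ j x ∂μ)
    (hMbar_inv : IsUnit Mbar)
    (G : Matrix (Fin N) (Fin N) ℝ) (t : ℝ) (ht : 0 ≤ t)
    (φ : Fin N → M → ℝ)
    (hφ_meas : ∀ i, Measurable (φ i))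
    (hφ_L2 : ∀ i, MemLp (φ i) 2 μ)
    (hφ : ∀ i, φ i =ᵐ[μ] fun x => ∑ j, (NormedSpace.exp (t • G)) i j * ψ j x)
    (Tbar Lbar : Matrix (Fin N) (Fin N) ℝ)
    (hTbar : ∀ i j, Tbar i j = ∫ x, φ i x * ψ j x ∂μ)
    (hLbar : ∀ i j, Lbar i j = ∫ x, (∑ k, G i k * ψ k x) * ψ j x ∂μ) :
    Tbar * Mbar⁻¹ = NormedSpace.exp (t • (Lbar * Mbar⁻¹)) := by
  have hdet : IsUnit Mbar.det := (Matrix.isUnit_iff_isUnit_det Mbar).mp hMbar_inv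
  have hMM : Mbar * Mbar⁻¹ = 1 := Matrix.mul_nonsing_inv Mbar hdet
  -- key: for any matrix A, ∫ (∑ k A i k * ψ k) * ψ j = (A * Mbar) i j
  have key : ∀ (A : Matrix (Fin N) (Fin N) ℝ) (i j : Fin N),
      (∫ x, (∑ k, A i k * ψ k x) * ψ j x ∂μ) = (A * Mbar) i j := by
    intro A i j
    have : (∫ x, (∑ k, A i k * ψ k x) * ψ j x ∂μ)
        = ∫ x, ∑ k, A i k * (ψ k x * ψ j x) ∂μ := by
      congr 1; ext x; rw [Finset.sum_mul]; congr 1; ext k; ring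
    rw [this, integral_finset_sum]
    · simp only [MeasureTheory.integral_const_mul, Matrix.mul_apply, hMbar]
    · intro k _
      exact (integrable_mul_L2 (hψ_L2 k) (hψ_L2 j)).const_mul _
  have hT : Tbar = NormedSpace.exp (t • G) * Mbar := by
    ext i j
    rw [hTbar, ← key (NormedSpace.exp (t • G)) i j]
    exact integral_congr_ae ((hφ i).mul (Filter.EventuallyEq.refl _ _))
  have hL : Lbar = G * Mbar := by
    ext i j
    rw [hLbar, key]
  rw [hT, hL, Matrix.mul_assoc, hMM, Matrix.mul_one, Matrix.mul_assoc, hMM, Matrix.mul_one]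
end

section
/- Let M be a measurable space, κ a Markov kernel on M, and ψ_1,…,ψ_N : M → ℝ bounded measurable functions; write Kψ_i(x) = ∫ ψ_i(y) dκ(x)(y) and K(ψ_i²)(x) = ∫ ψ_i(y)² dκ(x)(y). Let (Ω, P) be a probability space and Z_0, Z_1, …, Z_T : Ω → M measurable random variables such that, for each 0 ≤ k < T and each i, the conditional expectations given the σ-algebra 𝔽_k generated by (Z_0,…,Z_k) satisfy E[ψ_i(Z_{k+1}) | 𝔽_k] = (Kψ_i)(Z_k) almost surely and E[ψ_i(Z_{k+1})² | 𝔽_k] = K(ψ_i²)(Z_k) almost surely. Assume there exists γ̃ ≥ 0 with E[ψ_j(Z_k)² (K(ψ_i²)(Z_k) − (Kψ_i(Z_k))²)] ≤ γ̃ for all i, j and all 0 ≤ k < T. Define the random N×N matrices K̂_T with entries (1/T) Σ_{k=0}^{T−1} ψ_i(Z_{k+1}) ψ_j(Z_k) and K_T with entries (1/T) Σ_{k=0}^{T−1} (Kψ_i)(Z_k) ψ_j(Z_k). Then E[‖K_T − K̂_T‖_F²] ≤ N² γ̃ / T. -/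
open MeasureTheory ProbabilityTheory Matrix

namespace Stmt14Aux

section
variable {Ω : Type*} [MeasurableSpace Ω]

/-- Bounded measurable real function. -/
def MB (f : Ω → ℝ) : Prop := Measurable f ∧ ∃ c : ℝ, ∀ ω, |f ω| ≤ c

lemma MB.mul {f g : Ω → ℝ} (hf : MB f) (hg : MB g) : MB fun ω => f ω * g ω := by
  obtain ⟨hfm, cf, hcf⟩ := hf
  obtain ⟨hgm, cg, hcg⟩ := hg
  refine ⟨hfm.mul hgm, |cf| * |cg|, fun ω => ?_⟩
  rw [abs_mul]
  exact mul_le_mul ((hcf ω).trans (le_abs_self _)) ((hcg ω).trans (le_abs_self _))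
    (abs_nonneg _) (abs_nonneg _)

lemma MB.sub {f g : Ω → ℝ} (hf : MB f) (hg : MB g) : MB fun ω => f ω - g ω := by
  obtain ⟨hfm, cf, hcf⟩ := hf
  obtain ⟨hgm, cg, hcg⟩ := hg
  exact ⟨hfm.sub hgm, cf + cg, fun ω => (abs_sub _ _).trans (add_le_add (hcf ω) (hcg ω))⟩

lemma MB.sum {ι : Type*} {s : Finset ι} {f : ι → Ω → ℝ} (h : ∀ k ∈ s, MB (f k)) :
    MB fun ω => ∑ k ∈ s, f k ω := by
  classical
  induction s using Finset.induction_on with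
  | empty => exact ⟨by simpa using measurable_const, 0, by simp⟩
  | insert a s hx ih =>
    have h1 : MB (f a) := h a (Finset.mem_insert_self a s)
    have h2 : MB fun ω => ∑ k ∈ s, f k ω := ih fun k hk => h k (Finset.mem_insert_of_mem hk)
    obtain ⟨hm1, c1, hc1⟩ := h1
    obtain ⟨hm2, c2, hc2⟩ := h2
    refine ⟨?_, c1 + c2, fun ω => ?_⟩
    · simp only [Finset.sum_insert hx]; exact hm1.add hm2
    · simp only [Finset.sum_insert hx]
      exact (abs_add_le _ _).trans (add_le_add (hc1 ω) (hc2 ω))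

lemma MB.integrable (P : Measure Ω) [IsFiniteMeasure P] {f : Ω → ℝ} (hf : MB f) :
    Integrable f P := by
  obtain ⟨hfm, c, hc⟩ := hf
  exact (integrable_const c).mono' hfm.aestronglyMeasurable
    (Filter.Eventually.of_forall fun ω => by simpa [Real.norm_eq_abs] using hc ω)

end

/-- Pull-out: if `f` is `m`-measurable and `P[g|m] =ᵐ h` then `∫ f g = ∫ f h`. -/
lemma integral_mul_eq {Ω : Type*} [m0 : MeasurableSpace Ω] {P : Measure Ω} [IsProbabilityMeasure P]
    {m : MeasurableSpace Ω} (hm : m ≤ m0) {f g h : Ω → ℝ}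
    (hfm : StronglyMeasurable[m] f) (hf : @MB Ω m0 f) (hg : @MB Ω m0 g)
    (hgc : P[g|m] =ᵐ[P] h) :
    ∫ ω, f ω * g ω ∂P = ∫ ω, f ω * h ω ∂P := by
  have hfg : Integrable (f * g) P := @MB.integrable Ω m0 P _ _ (@MB.mul Ω m0 f g hf hg)
  have h1 : P[f * g|m] =ᵐ[P] f * P[g|m] :=
    condExp_mul_of_stronglyMeasurable_left hfm hfg (@MB.integrable Ω m0 P _ _ hg)
  have h2 : f * P[g|m] =ᵐ[P] fun ω => f ω * h ω := by
    filter_upwards [hgc] with ω hω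
    simp [hω]
  calc ∫ ω, f ω * g ω ∂P = ∫ ω, (f * g) ω ∂P := rfl
    _ = ∫ ω, (P[f * g|m]) ω ∂P := (integral_condExp hm).symm
    _ = ∫ ω, f ω * h ω ∂P := integral_congr_ae (h1.trans h2)

end Stmt14Aux

open Stmt14Aux

/-- equation 2.18 of Proposition 2.8, Markov-chain case. For data from
a single trajectory of a Markov chain with transition kernel `κ`, the mean-square
Frobenius distance between the data-driven matrix `K̂_T` and the Koopman stiffness matrix
`K_T` is bounded by `N² γ̃ / T`. -/
theorem stmt_14 {M : Type*} [mM : MeasurableSpace M]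
    (κ : Kernel M M) [IsMarkovKernel κ] (N : ℕ)
    (ψ : Fin N → M → ℝ)
    (hψ_meas : ∀ i, Measurable (ψ i))
    (hψ_bdd : ∀ i, ∃ C : ℝ, ∀ x, |ψ i x| ≤ C)
    (Kψ Kψ2 : Fin N → M → ℝ)
    (hKψ : ∀ i x, Kψ i x = ∫ y, ψ i y ∂(κ x))
    (hKψ2 : ∀ i x, Kψ2 i x = ∫ y, (ψ i y) ^ 2 ∂(κ x))
    {Ω : Type*} [MeasurableSpace Ω] (P : Measure Ω) [IsProbabilityMeasure P]
    (T : ℕ) (hT : 0 < T) (Z : ℕ → Ω → M) (hZ_meas : ∀ k, Measurable (Z k))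
    (F : ℕ → MeasurableSpace Ω)
    (hF : ∀ k, F k = ⨆ i ∈ Finset.range (k + 1), MeasurableSpace.comap (Z i) mM)
    (hcond₁ : ∀ i, ∀ k < T,
      P[(fun ω => ψ i (Z (k + 1) ω)) | F k] =ᵐ[P] fun ω => Kψ i (Z k ω))
    (hcond₂ : ∀ i, ∀ k < T,
      P[(fun ω => (ψ i (Z (k + 1) ω)) ^ 2) | F k] =ᵐ[P] fun ω => Kψ2 i (Z k ω))
    (γ' : ℝ) (hγ' : 0 ≤ γ')
    (hbound : ∀ i j : Fin N, ∀ k < T,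
      (∫ ω, ψ j (Z k ω) ^ 2 * (Kψ2 i (Z k ω) - (Kψ i (Z k ω)) ^ 2) ∂P) ≤ γ')
    (Khat KT : Ω → Matrix (Fin N) (Fin N) ℝ)
    (hKhat : ∀ ω i j, Khat ω i j
      = (T : ℝ)⁻¹ * ∑ k ∈ Finset.range T, ψ i (Z (k + 1) ω) * ψ j (Z k ω))
    (hKT : ∀ ω i j, KT ω i j
      = (T : ℝ)⁻¹ * ∑ k ∈ Finset.range T, Kψ i (Z k ω) * ψ j (Z k ω)) :
    (∫ ω, frobeniusNormSq (KT ω - Khat ω) ∂P) ≤ (N : ℝ) ^ 2 * γ' / T := by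
  classical
  -- uniform bounds
  choose C0 hC0 using hψ_bdd
  set C : Fin N → ℝ := fun i => max (C0 i) 0 with hCdef
  have hψb : ∀ i x, |ψ i x| ≤ C i := fun i x => (hC0 i x).trans (le_max_left _ _)
  have hKψb : ∀ i x, |Kψ i x| ≤ C i := by
    intro i x
    rw [hKψ]
    have h := norm_integral_le_of_norm_le_const (μ := κ x) (f := ψ i) (C := C i)
      (Filter.Eventually.of_forall fun y => by simpa [Real.norm_eq_abs] using hψb i y)
    simpa [Real.norm_eq_abs, measure_univ] using h
  have hKψ2b : ∀ i x, |Kψ2 i x| ≤ C i ^ 2 := by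
    intro i x
    rw [hKψ2]
    have h := norm_integral_le_of_norm_le_const (μ := κ x) (f := fun y => ψ i y ^ 2)
      (C := C i ^ 2) (Filter.Eventually.of_forall fun y => by
        rw [Real.norm_eq_abs, abs_pow]
        exact pow_le_pow_left₀ (abs_nonneg _) (hψb i y) 2)
    simpa [Real.norm_eq_abs, measure_univ] using h
  -- measurability of the Koopman images
  have hKψm : ∀ i, Measurable (Kψ i) := by
    intro i
    have h : StronglyMeasurable fun x => ∫ y, ψ i y ∂(κ x) :=
      MeasureTheory.StronglyMeasurable.integral_kernel_prod_right (κ := κ)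
        (f := fun _ y => ψ i y) (((hψ_meas i).comp measurable_snd).stronglyMeasurable)
    have he : Kψ i = fun x => ∫ y, ψ i y ∂(κ x) := funext fun x => hKψ i x
    rw [he]; exact h.measurable
  have hKψ2m : ∀ i, Measurable (Kψ2 i) := by
    intro i
    have h : StronglyMeasurable fun x => ∫ y, ψ i y ^ 2 ∂(κ x) :=
      MeasureTheory.StronglyMeasurable.integral_kernel_prod_right (κ := κ)
        (f := fun _ y => ψ i y ^ 2)
        ((((hψ_meas i).pow_const 2).comp measurable_snd).stronglyMeasurable)
    have he : Kψ2 i = fun x => ∫ y, ψ i y ^ 2 ∂(κ x) := funext fun x => hKψ2 i x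
    rw [he]; exact h.measurable
  -- MB basic blocks
  have mbψ : ∀ (i : Fin N) (k : ℕ), MB fun ω => ψ i (Z k ω) :=
    fun i k => ⟨(hψ_meas i).comp (hZ_meas k), C i, fun ω => hψb i _⟩
  have mbKψ : ∀ (i : Fin N) (k : ℕ), MB fun ω => Kψ i (Z k ω) :=
    fun i k => ⟨(hKψm i).comp (hZ_meas k), C i, fun ω => hKψb i _⟩
  have mbKψ2 : ∀ (i : Fin N) (k : ℕ), MB fun ω => Kψ2 i (Z k ω) :=
    fun i k => ⟨(hKψ2m i).comp (hZ_meas k), C i ^ 2, fun ω => hKψ2b i _⟩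
  -- filtration facts
  have hFle : ∀ k, F k ≤ ‹MeasurableSpace Ω› := by
    intro k; rw [hF k]
    exact iSup_le fun n => iSup_le fun _ => (hZ_meas n).comap_le
  have hZF : ∀ n k, n ≤ k → Measurable[F k] (Z n) := by
    intro n k hnk
    rw [hF k]
    refine measurable_iff_comap_le.mpr ?_
    exact le_biSup (fun i => MeasurableSpace.comap (Z i) mM)
      (Finset.mem_range.mpr (Nat.lt_succ_of_le hnk))
  -- the martingale differences
  set X : Fin N → Fin N → ℕ → Ω → ℝ := fun i j k ω =>
    Kψ i (Z k ω) * ψ j (Z k ω) - ψ i (Z (k + 1) ω) * ψ j (Z k ω) with hXdef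
  have mbX : ∀ (i j : Fin N) (k : ℕ), MB (X i j k) := fun i j k =>
    MB.sub ((mbKψ i k).mul (mbψ j k)) ((mbψ i (k + 1)).mul (mbψ j k))
  -- entries of the difference matrix
  have entry : ∀ (i j : Fin N) ω, (KT ω - Khat ω) i j
      = (T : ℝ)⁻¹ * ∑ k ∈ Finset.range T, X i j k ω := by
    intro i j ω
    rw [Matrix.sub_apply, hKT ω i j, hKhat ω i j, ← mul_sub, ← Finset.sum_sub_distrib]
  -- conditional expectation of X is zero
  have hX0 : ∀ (i j : Fin N) (k : ℕ), k < T → P[X i j k | F k] =ᵐ[P] 0 := by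
    intro i j k hk
    have hA_sm : StronglyMeasurable[F k] fun ω => Kψ i (Z k ω) * ψ j (Z k ω) := by
      have h1 : Measurable[F k] fun ω => Kψ i (Z k ω) := (hKψm i).comp (hZF k k le_rfl)
      have h2 : Measurable[F k] fun ω => ψ j (Z k ω) := (hψ_meas j).comp (hZF k k le_rfl)
      exact (h1.mul h2).stronglyMeasurable
    have intA : Integrable (fun ω => Kψ i (Z k ω) * ψ j (Z k ω)) P :=
      ((mbKψ i k).mul (mbψ j k)).integrable P
    have intB : Integrable (fun ω => ψ i (Z (k + 1) ω) * ψ j (Z k ω)) P :=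
      ((mbψ i (k + 1)).mul (mbψ j k)).integrable P
    have hB_eq : P[(fun ω => ψ i (Z (k + 1) ω) * ψ j (Z k ω)) | F k]
        =ᵐ[P] fun ω => ψ j (Z k ω) * Kψ i (Z k ω) := by
      have hcomm : (fun ω => ψ i (Z (k + 1) ω) * ψ j (Z k ω))
          = (fun ω => ψ j (Z k ω)) * fun ω => ψ i (Z (k + 1) ω) := by
        funext ω; simp [mul_comm]
      rw [hcomm]
      have hf_sm : StronglyMeasurable[F k] fun ω => ψ j (Z k ω) :=
        ((hψ_meas j).comp (hZF k k le_rfl)).stronglyMeasurable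
      have h1 := condExp_mul_of_stronglyMeasurable_left (μ := P) hf_sm
        (show Integrable ((fun ω => ψ j (Z k ω)) * fun ω => ψ i (Z (k + 1) ω)) P from
          ((mbψ j k).mul (mbψ i (k + 1))).integrable P)
        ((mbψ i (k + 1)).integrable P)
      refine h1.trans ?_
      filter_upwards [hcond₁ i k hk] with ω hω
      simp only [Pi.mul_apply, hω]
    have hA_eq : P[(fun ω => Kψ i (Z k ω) * ψ j (Z k ω)) | F k]
        = fun ω => Kψ i (Z k ω) * ψ j (Z k ω) :=
      condExp_of_stronglyMeasurable (hFle k) hA_sm intA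
    refine (condExp_sub intA intB _).trans ?_
    filter_upwards [hB_eq] with ω hω
    simp only [Pi.sub_apply, hA_eq, hω, Pi.zero_apply]
    ring
  -- cross terms vanish
  have hcross : ∀ (i j : Fin N) (k l : ℕ), k < l → l < T →
      ∫ ω, X i j k ω * X i j l ω ∂P = 0 := by
    intro i j k l hkl hlT
    have hXk_sm : StronglyMeasurable[F l] (X i j k) := by
      have h1 : Measurable[F l] fun ω => Kψ i (Z k ω) := (hKψm i).comp (hZF k l hkl.le)
      have h2 : Measurable[F l] fun ω => ψ j (Z k ω) := (hψ_meas j).comp (hZF k l hkl.le)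
      have h3 : Measurable[F l] fun ω => ψ i (Z (k + 1) ω) :=
        (hψ_meas i).comp (hZF (k + 1) l hkl)
      exact ((h1.mul h2).sub (h3.mul h2)).stronglyMeasurable
    have h := integral_mul_eq (hFle l) hXk_sm (mbX i j k) (mbX i j l) (hX0 i j l hlT)
    simpa using h
  -- diagonal terms
  have hdiag : ∀ (i j : Fin N) (k : ℕ), k < T → ∫ ω, X i j k ω * X i j k ω ∂P ≤ γ' := by
    intro i j k hk
    have sm_c2 : StronglyMeasurable[F k] fun ω => ψ j (Z k ω) ^ 2 := by
      have h2 : Measurable[F k] fun ω => ψ j (Z k ω) := (hψ_meas j).comp (hZF k k le_rfl)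
      exact (h2.pow_const 2).stronglyMeasurable
    have sm_c2a : StronglyMeasurable[F k] fun ω => ψ j (Z k ω) ^ 2 * Kψ i (Z k ω) := by
      have h1 : Measurable[F k] fun ω => Kψ i (Z k ω) := (hKψm i).comp (hZF k k le_rfl)
      have h2 : Measurable[F k] fun ω => ψ j (Z k ω) := (hψ_meas j).comp (hZF k k le_rfl)
      exact ((h2.pow_const 2).mul h1).stronglyMeasurable
    have mb_c2 : MB fun ω => ψ j (Z k ω) ^ 2 := by
      have h := (mbψ j k).mul (mbψ j k)
      have he : (fun ω => ψ j (Z k ω) ^ 2) = fun ω => ψ j (Z k ω) * ψ j (Z k ω) := by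
        funext ω; ring
      rw [he]; exact h
    have mb_c2a : MB fun ω => ψ j (Z k ω) ^ 2 * Kψ i (Z k ω) := mb_c2.mul (mbKψ i k)
    have mb_g2 : MB fun ω => ψ i (Z (k + 1) ω) ^ 2 := by
      have h := (mbψ i (k + 1)).mul (mbψ i (k + 1))
      have he : (fun ω => ψ i (Z (k + 1) ω) ^ 2)
          = fun ω => ψ i (Z (k + 1) ω) * ψ i (Z (k + 1) ω) := by funext ω; ring
      rw [he]; exact h
    have e1 : ∫ ω, (ψ j (Z k ω) ^ 2 * Kψ i (Z k ω)) * ψ i (Z (k + 1) ω) ∂P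
        = ∫ ω, (ψ j (Z k ω) ^ 2 * Kψ i (Z k ω)) * Kψ i (Z k ω) ∂P :=
      integral_mul_eq (hFle k) sm_c2a mb_c2a (mbψ i (k + 1)) (hcond₁ i k hk)
    have e2 : ∫ ω, ψ j (Z k ω) ^ 2 * ψ i (Z (k + 1) ω) ^ 2 ∂P
        = ∫ ω, ψ j (Z k ω) ^ 2 * Kψ2 i (Z k ω) ∂P :=
      integral_mul_eq (hFle k) sm_c2 mb_c2 mb_g2 (hcond₂ i k hk)
    -- integrabilities
    have hu : Integrable (fun ω => (ψ j (Z k ω) ^ 2 * Kψ i (Z k ω)) * Kψ i (Z k ω)) P :=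
      (mb_c2a.mul (mbKψ i k)).integrable P
    have hv : Integrable (fun ω => (ψ j (Z k ω) ^ 2 * Kψ i (Z k ω)) * ψ i (Z (k + 1) ω)) P :=
      (mb_c2a.mul (mbψ i (k + 1))).integrable P
    have hw : Integrable (fun ω => ψ j (Z k ω) ^ 2 * ψ i (Z (k + 1) ω) ^ 2) P :=
      (mb_c2.mul mb_g2).integrable P
    have hw' : Integrable (fun ω => ψ j (Z k ω) ^ 2 * Kψ2 i (Z k ω)) P :=
      (mb_c2.mul (mbKψ2 i k)).integrable P
    have expand : ∫ ω, X i j k ω * X i j k ω ∂P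
        = ∫ ω, ((ψ j (Z k ω) ^ 2 * Kψ i (Z k ω)) * Kψ i (Z k ω)
            - 2 * ((ψ j (Z k ω) ^ 2 * Kψ i (Z k ω)) * ψ i (Z (k + 1) ω))
            + ψ j (Z k ω) ^ 2 * ψ i (Z (k + 1) ω) ^ 2) ∂P := by
      refine integral_congr_ae (Filter.Eventually.of_forall fun ω => ?_)
      show X i j k ω * X i j k ω = _
      rw [hXdef]
      ring
    have h1 : ∫ ω, ((ψ j (Z k ω) ^ 2 * Kψ i (Z k ω)) * Kψ i (Z k ω)
            - 2 * ((ψ j (Z k ω) ^ 2 * Kψ i (Z k ω)) * ψ i (Z (k + 1) ω))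
            + ψ j (Z k ω) ^ 2 * ψ i (Z (k + 1) ω) ^ 2) ∂P
        = (∫ ω, ((ψ j (Z k ω) ^ 2 * Kψ i (Z k ω)) * Kψ i (Z k ω)
            - 2 * ((ψ j (Z k ω) ^ 2 * Kψ i (Z k ω)) * ψ i (Z (k + 1) ω))) ∂P)
          + ∫ ω, ψ j (Z k ω) ^ 2 * ψ i (Z (k + 1) ω) ^ 2 ∂P :=
      integral_add (hu.sub (hv.const_mul 2)) hw
    have h2 : ∫ ω, ((ψ j (Z k ω) ^ 2 * Kψ i (Z k ω)) * Kψ i (Z k ω)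
            - 2 * ((ψ j (Z k ω) ^ 2 * Kψ i (Z k ω)) * ψ i (Z (k + 1) ω))) ∂P
        = (∫ ω, (ψ j (Z k ω) ^ 2 * Kψ i (Z k ω)) * Kψ i (Z k ω) ∂P)
          - ∫ ω, 2 * ((ψ j (Z k ω) ^ 2 * Kψ i (Z k ω)) * ψ i (Z (k + 1) ω)) ∂P :=
      integral_sub hu (hv.const_mul 2)
    have h3 : ∫ ω, 2 * ((ψ j (Z k ω) ^ 2 * Kψ i (Z k ω)) * ψ i (Z (k + 1) ω)) ∂P
        = 2 * ∫ ω, (ψ j (Z k ω) ^ 2 * Kψ i (Z k ω)) * ψ i (Z (k + 1) ω) ∂P :=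
      integral_const_mul 2 _
    rw [expand, h1, h2, h3, e1, e2]
    have final : (∫ ω, (ψ j (Z k ω) ^ 2 * Kψ i (Z k ω)) * Kψ i (Z k ω) ∂P)
        - 2 * ∫ ω, (ψ j (Z k ω) ^ 2 * Kψ i (Z k ω)) * Kψ i (Z k ω) ∂P
        + ∫ ω, ψ j (Z k ω) ^ 2 * Kψ2 i (Z k ω) ∂P
        = ∫ ω, ψ j (Z k ω) ^ 2 * (Kψ2 i (Z k ω) - Kψ i (Z k ω) ^ 2) ∂P := by
      have h1 : ∫ ω, ψ j (Z k ω) ^ 2 * (Kψ2 i (Z k ω) - Kψ i (Z k ω) ^ 2) ∂P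
          = (∫ ω, ψ j (Z k ω) ^ 2 * Kψ2 i (Z k ω) ∂P)
            - ∫ ω, (ψ j (Z k ω) ^ 2 * Kψ i (Z k ω)) * Kψ i (Z k ω) ∂P := by
        rw [← integral_sub hw' hu]
        refine integral_congr_ae (Filter.Eventually.of_forall fun ω => ?_)
        ring
      rw [h1]; ring
    rw [final]
    exact hbound i j k hk
  -- sum bound
  have hsum : ∀ i j : Fin N,
      ∫ ω, (∑ k ∈ Finset.range T, X i j k ω) ^ 2 ∂P ≤ T * γ' := by
    intro i j
    have expand : ∫ ω, (∑ k ∈ Finset.range T, X i j k ω) ^ 2 ∂P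
        = ∑ k ∈ Finset.range T, ∑ l ∈ Finset.range T, ∫ ω, X i j k ω * X i j l ω ∂P := by
      rw [integral_congr_ae (Filter.Eventually.of_forall fun ω => by
        rw [sq, Finset.sum_mul_sum])]
      rw [integral_finset_sum _ fun k _ =>
        MB.integrable P (MB.sum fun l _ => (mbX i j k).mul (mbX i j l))]
      exact Finset.sum_congr rfl fun k _ =>
        integral_finset_sum _ fun l _ => ((mbX i j k).mul (mbX i j l)).integrable P
    rw [expand]
    calc ∑ k ∈ Finset.range T, ∑ l ∈ Finset.range T, ∫ ω, X i j k ω * X i j l ω ∂P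
        ≤ ∑ _k ∈ Finset.range T, γ' := by
          refine Finset.sum_le_sum fun k hk => ?_
          have hkT := Finset.mem_range.mp hk
          have hsingle : ∑ l ∈ Finset.range T, ∫ ω, X i j k ω * X i j l ω ∂P
              = ∫ ω, X i j k ω * X i j k ω ∂P := by
            refine Finset.sum_eq_single_of_mem k hk fun l hl hne => ?_
            have hlT := Finset.mem_range.mp hl
            rcases lt_or_gt_of_ne hne with h | h
            · exact (integral_congr_ae (Filter.Eventually.of_forall fun ω =>
                mul_comm (X i j k ω) (X i j l ω))).trans (hcross i j l k h hkT)
            · exact hcross i j k l h hlT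
          rw [hsingle]
          exact hdiag i j k hkT
      _ = T * γ' := by simp [Finset.sum_const, Finset.card_range, nsmul_eq_mul]
  have hTpos : (0 : ℝ) < (T : ℝ) := by exact_mod_cast hT
  have key : ∀ i j : Fin N, ∫ ω, ((KT ω - Khat ω) i j) ^ 2 ∂P ≤ γ' / T := by
    intro i j
    have congr1 : ∫ ω, ((KT ω - Khat ω) i j) ^ 2 ∂P
        = ∫ ω, ((T : ℝ)⁻¹) ^ 2 * (∑ k ∈ Finset.range T, X i j k ω) ^ 2 ∂P := by
      refine integral_congr_ae (Filter.Eventually.of_forall fun ω => ?_)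
      show ((KT ω - Khat ω) i j) ^ 2
        = ((T : ℝ)⁻¹) ^ 2 * (∑ k ∈ Finset.range T, X i j k ω) ^ 2
      rw [entry i j ω, mul_pow]
    rw [congr1, integral_const_mul]
    calc ((T : ℝ)⁻¹) ^ 2 * ∫ ω, (∑ k ∈ Finset.range T, X i j k ω) ^ 2 ∂P
        ≤ ((T : ℝ)⁻¹) ^ 2 * ((T : ℝ) * γ') :=
          mul_le_mul_of_nonneg_left (hsum i j) (by positivity)
      _ = γ' / T := by field_simp
  -- entry integrability for the final sum exchange
  have mbE : ∀ i j : Fin N, MB fun ω => ((KT ω - Khat ω) i j) ^ 2 := by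
    intro i j
    have h1 : MB fun ω => (KT ω - Khat ω) i j := by
      have he : (fun ω => (KT ω - Khat ω) i j)
          = fun ω => (T : ℝ)⁻¹ * ∑ k ∈ Finset.range T, X i j k ω :=
        funext fun ω => entry i j ω
      rw [he]
      exact MB.mul ⟨measurable_const, |(T : ℝ)⁻¹|, fun ω => le_rfl⟩
        (MB.sum fun k _ => mbX i j k)
    have he2 : (fun ω => ((KT ω - Khat ω) i j) ^ 2)
        = fun ω => (KT ω - Khat ω) i j * (KT ω - Khat ω) i j := by
      funext ω; ring
    rw [he2]
    exact h1.mul h1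
  have hfro : ∫ ω, frobeniusNormSq (KT ω - Khat ω) ∂P
      = ∑ i : Fin N, ∑ j : Fin N, ∫ ω, ((KT ω - Khat ω) i j) ^ 2 ∂P := by
    simp only [frobeniusNormSq]
    rw [integral_finset_sum _ fun i _ => MB.integrable P (MB.sum fun j _ => mbE i j)]
    exact Finset.sum_congr rfl fun i _ =>
      integral_finset_sum _ fun j _ => (mbE i j).integrable P
  rw [hfro]
  calc ∑ i : Fin N, ∑ j : Fin N, ∫ ω, ((KT ω - Khat ω) i j) ^ 2 ∂P
      ≤ ∑ _i : Fin N, ∑ _j : Fin N, γ' / T :=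
        Finset.sum_le_sum fun i _ => Finset.sum_le_sum fun j _ => key i j
    _ = (N : ℝ) ^ 2 * γ' / T := by
        simp [Finset.sum_const, Finset.card_univ, nsmul_eq_mul]
        ring
end

section
/- Let M be a measurable space, κ a Markov kernel on M, and ψ_1,…,ψ_N : M → ℝ bounded measurable functions; write Kψ_i(x) = ∫ ψ_i(y) dκ(x)(y) and K(ψ_i²)(x) = ∫ ψ_i(y)² dκ(x)(y). On a probability space let (X_k, Y_k), k = 1,…,T, be mutually independent M×M-valued random pairs such that each pair has transition kernel κ, with ν_k the law of X_k, and suppose γ̃ ≥ 0 satisfies ∫ ψ_j(x)² (K(ψ_i²)(x) − (Kψ_i(x))²) dν_k(x) ≤ γ̃ for all i, j, k. Define the random N×N matrices K̂_T with entries (1/T) Σ_k ψ_i(Y_k) ψ_j(X_k), K_T with entries (1/T) Σ_k (Kψ_i)(X_k) ψ_j(X_k), and M̄_T with entries (1/T) Σ_k ψ_i(X_k) ψ_j(X_k). Assume M̄_T is almost surely invertible with E[‖M̄_T⁻¹‖_F²] ≤ M̃ for some constant M̃ ≥ 0, and that the relevant expectations are finite. Then E[‖K_T M̄_T⁻¹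 − K̂_T M̄_T⁻¹‖_F] ≤ √(N² γ̃ M̃ / T). -/
open MeasureTheory ProbabilityTheory Matrix

/-- The Frobenius norm of a real matrix. -/
noncomputable def frobeniusNorm' {m n : Type*} [Fintype m] [Fintype n]
    (A : Matrix m n ℝ) : ℝ :=
  Real.sqrt (frobeniusNormSq A)

lemma frobeniusNormSq_nonneg {m n : Type*} [Fintype m] [Fintype n] (A : Matrix m n ℝ) :
    0 ≤ frobeniusNormSq A :=
  Finset.sum_nonneg fun _ _ => Finset.sum_nonneg fun _ _ => sq_nonneg _

lemma frobeniusNormSq_mul_le {n : Type*} [Fintype n] (A B : Matrix n n ℝ) :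
    frobeniusNormSq (A * B) ≤ frobeniusNormSq A * frobeniusNormSq B := by
  calc frobeniusNormSq (A*B) ≤ ∑ i, ∑ j, (∑ l, A i l ^2) * (∑ l, B l j ^2) := by
        refine Finset.sum_le_sum fun i _ => Finset.sum_le_sum fun j _ => ?_
        rw [Matrix.mul_apply]
        exact Finset.sum_mul_sq_le_sq_mul_sq _ _ _
    _ = (∑ i, ∑ l, A i l ^2) * (∑ j, ∑ l, B l j ^2) := by
        rw [Finset.sum_mul_sum]
    _ = frobeniusNormSq A * frobeniusNormSq B := by
        rw [frobeniusNormSq, frobeniusNormSq, Finset.sum_comm (f := fun j l => B l j ^2)]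

lemma frobeniusNorm'_nonneg {m n : Type*} [Fintype m] [Fintype n] (A : Matrix m n ℝ) :
    0 ≤ frobeniusNorm' A := Real.sqrt_nonneg _

lemma frobeniusNorm'_mul_le {n : Type*} [Fintype n] (A B : Matrix n n ℝ) :
    frobeniusNorm' (A * B) ≤ frobeniusNorm' A * frobeniusNorm' B := by
  rw [frobeniusNorm', frobeniusNorm', frobeniusNorm', ← Real.sqrt_mul (frobeniusNormSq_nonneg A)]
  exact Real.sqrt_le_sqrt (frobeniusNormSq_mul_le A B)
/-- Corollary 2.9 of the paper with the concrete data-driven matrices.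
The expected Frobenius distance between the EDMD matrix `K̂_T M̄_T⁻¹` and the projected
Koopman matrix `K_T M̄_T⁻¹` is bounded by `√(N² γ̃ M̃ / T)`. -/
theorem stmt_15 {M : Type*} [MeasurableSpace M]
    (κ : Kernel M M) [IsMarkovKernel κ] (N : ℕ)
    (ψ : Fin N → M → ℝ)
    (hψ_meas : ∀ i, Measurable (ψ i))
    (hψ_bdd : ∀ i, ∃ C : ℝ, ∀ x, |ψ i x| ≤ C)
    (Kψ Kψ2 : Fin N → M → ℝ)
    (hKψ : ∀ i x, Kψ i x = ∫ y, ψ i y ∂(κ x))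
    (hKψ2 : ∀ i x, Kψ2 i x = ∫ y, (ψ i y) ^ 2 ∂(κ x))
    {Ω : Type*} [MeasurableSpace Ω] (P : Measure Ω) [IsProbabilityMeasure P]
    (T : ℕ) (hT : 0 < T) (X Y : Fin T → Ω → M)
    (hX_meas : ∀ k, Measurable (X k)) (hY_meas : ∀ k, Measurable (Y k))
    (hindep : iIndepFun
      (fun k ω => (X k ω, Y k ω)) P)
    (hlaw : ∀ k, Measure.map (fun ω => (X k ω, Y k ω)) P
      = (Measure.map (X k) P) ⊗ₘ κ)
    (γ' : ℝ) (hγ' : 0 ≤ γ')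
    (hbound : ∀ i j k,
      (∫ x, ψ j x ^ 2 * (Kψ2 i x - (Kψ i x) ^ 2) ∂(Measure.map (X k) P)) ≤ γ')
    (Khat KT Mbar : Ω → Matrix (Fin N) (Fin N) ℝ)
    (hKhat : ∀ ω i j, Khat ω i j = (T : ℝ)⁻¹ * ∑ k, ψ i (Y k ω) * ψ j (X k ω))
    (hKT : ∀ ω i j, KT ω i j = (T : ℝ)⁻¹ * ∑ k, Kψ i (X k ω) * ψ j (X k ω))
    (hMbar : ∀ ω i j, Mbar ω i j = (T : ℝ)⁻¹ * ∑ k, ψ i (X k ω) * ψ j (X k ω))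
    (hMbar_inv : ∀ᵐ ω ∂P, IsUnit (Mbar ω))
    (Mt : ℝ) (hMt : 0 ≤ Mt)
    (hMbar_bound : (∫ ω, frobeniusNormSq (Mbar ω)⁻¹ ∂P) ≤ Mt)
    (hInt₁ : Integrable (fun ω => frobeniusNormSq (KT ω - Khat ω)) P)
    (hInt₂ : Integrable (fun ω => frobeniusNormSq (Mbar ω)⁻¹) P)
    (hInt₃ : Integrable
      (fun ω => frobeniusNorm' (KT ω * (Mbar ω)⁻¹ - Khat ω * (Mbar ω)⁻¹)) P) :
    (∫ ω, frobeniusNorm' (KT ω * (Mbar ω)⁻¹ - Khat ω * (Mbar ω)⁻¹) ∂P)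
      ≤ Real.sqrt ((N : ℝ) ^ 2 * γ' * Mt / T) := by
  classical
  choose C hC using hψ_bdd
  have hTpos : (0:ℝ) < T := by exact_mod_cast hT
  have hΩ : Nonempty Ω := by
    by_contra h
    rw [not_nonempty_iff] at h
    have h1 : P Set.univ = 1 := measure_univ
    rw [Set.univ_eq_empty_iff.mpr h, measure_empty] at h1
    exact zero_ne_one h1
  have hMne : Nonempty M := ⟨X ⟨0, hT⟩ hΩ.some⟩
  have hCnn : ∀ i, 0 ≤ C i := fun i => le_trans (abs_nonneg _) (hC i hMne.some)
  have hψ_SM : ∀ i, StronglyMeasurable (ψ i) := fun i => (hψ_meas i).stronglyMeasurable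
  have hKψ_meas : ∀ i, Measurable (Kψ i) := by
    intro i
    have h : StronglyMeasurable fun x => ∫ y, (fun p : M × M => ψ i p.2) (x, y) ∂κ x :=
      StronglyMeasurable.integral_kernel_prod_right'
        ((hψ_meas i).comp measurable_snd).stronglyMeasurable
    have he : Kψ i = fun x => ∫ y, ψ i y ∂κ x := funext fun x => hKψ i x
    rw [he]; exact h.measurable
  have hint_ψ : ∀ i x, Integrable (ψ i) (κ x) := by
    intro i x
    refine memLp_one_iff_integrable.mp (MemLp.of_bound (hψ_SM i).aestronglyMeasurable (C i) ?_)
    exact Filter.Eventually.of_forall fun y => by rw [Real.norm_eq_abs]; exact hC i y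
  have hint_ψ2 : ∀ i x, Integrable (fun y => ψ i y ^ 2) (κ x) := by
    intro i x
    refine memLp_one_iff_integrable.mp (MemLp.of_bound
      ((hψ_meas i).pow_const 2).aestronglyMeasurable (C i ^ 2) ?_)
    refine Filter.Eventually.of_forall fun y => ?_
    rw [Real.norm_eq_abs, abs_pow]
    exact pow_le_pow_left₀ (abs_nonneg _) (hC i y) 2
  have hKψ_bdd : ∀ i x, |Kψ i x| ≤ C i := by
    intro i x
    rw [hKψ]
    calc |∫ y, ψ i y ∂κ x| ≤ C i * ((κ x) Set.univ).toReal := by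
          rw [← Real.norm_eq_abs]
          exact norm_integral_le_of_norm_le_const
            (Filter.Eventually.of_forall fun y => by rw [Real.norm_eq_abs]; exact hC i y)
      _ = C i := by simp
  -- Per-entry second moment bound
  have key : ∀ i j : Fin N, Integrable (fun ω => (KT ω i j - Khat ω i j) ^ 2) P ∧
      (∫ ω, (KT ω i j - Khat ω i j) ^ 2 ∂P) ≤ γ' / T := by
    intro i j
    set g : M × M → ℝ := fun p => (Kψ i p.1 - ψ i p.2) * ψ j p.1 with hg
    have hg_meas : Measurable g :=
      (((hKψ_meas i).comp measurable_fst).sub ((hψ_meas i).comp measurable_snd)).mul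
        ((hψ_meas j).comp measurable_fst)
    set B : ℝ := (C i + C i) * C j with hB
    have hg_bd : ∀ p, |g p| ≤ B := by
      intro p
      calc |g p| = |Kψ i p.1 - ψ i p.2| * |ψ j p.1| := abs_mul _ _
        _ ≤ (C i + C i) * C j := by
            refine mul_le_mul ?_ (hC j p.1) (abs_nonneg _) (by linarith [hCnn i])
            exact (abs_sub _ _).trans (add_le_add (hKψ_bdd i _) (hC i _))
    set Z : Fin T → Ω → ℝ := fun k ω => g (X k ω, Y k ω) with hZdef
    have hZ_meas : ∀ k, Measurable (Z k) := fun k =>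
      hg_meas.comp ((hX_meas k).prodMk (hY_meas k))
    have hZ_mem : ∀ k, MemLp (Z k) 2 P := fun k =>
      MemLp.of_bound (hZ_meas k).aestronglyMeasurable B
        (Filter.Eventually.of_forall fun ω => by rw [Real.norm_eq_abs]; exact hg_bd _)
    have hZ_int : ∀ k, Integrable (Z k) P := fun k => (hZ_mem k).integrable one_le_two
    have hEZ : ∀ k, ∫ ω, Z k ω ∂P = 0 := by
      intro k
      haveI : IsProbabilityMeasure (Measure.map (X k) P) :=
        Measure.isProbabilityMeasure_map (hX_meas k).aemeasurable
      have hgint : Integrable g ((Measure.map (X k) P) ⊗ₘ κ) :=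
        memLp_one_iff_integrable.mp (MemLp.of_bound hg_meas.aestronglyMeasurable B
          (Filter.Eventually.of_forall fun p => by rw [Real.norm_eq_abs]; exact hg_bd p))
      have h1 : ∫ ω, Z k ω ∂P = ∫ p, g p ∂(Measure.map (fun ω => (X k ω, Y k ω)) P) :=
        (integral_map ((hX_meas k).prodMk (hY_meas k)).aemeasurable
          hg_meas.aestronglyMeasurable).symm
      rw [h1, hlaw k, Measure.integral_compProd hgint]
      have hin : ∀ x, ∫ y, g (x, y) ∂κ x = 0 := by
        intro x
        have e : (fun y => g (x, y)) = fun y => (Kψ i x - ψ i y) * ψ j x := rfl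
        rw [e, integral_mul_const, integral_sub (integrable_const _) (hint_ψ i x),
          integral_const]
        simp [hKψ i x]
      simp [hin]
    have hEZ2 : ∀ k, ∫ ω, Z k ω ^ 2 ∂P ≤ γ' := by
      intro k
      haveI : IsProbabilityMeasure (Measure.map (X k) P) :=
        Measure.isProbabilityMeasure_map (hX_meas k).aemeasurable
      have hg2int : Integrable (fun p => g p ^ 2) ((Measure.map (X k) P) ⊗ₘ κ) :=
        memLp_one_iff_integrable.mp (MemLp.of_bound
          (hg_meas.pow_const 2).aestronglyMeasurable (B ^ 2)
          (Filter.Eventually.of_forall fun p => by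
            rw [Real.norm_eq_abs, abs_pow]
            exact pow_le_pow_left₀ (abs_nonneg _) (hg_bd p) 2))
      have h1 : ∫ ω, Z k ω ^ 2 ∂P
          = ∫ p, g p ^ 2 ∂(Measure.map (fun ω => (X k ω, Y k ω)) P) :=
        (integral_map ((hX_meas k).prodMk (hY_meas k)).aemeasurable
          (hg_meas.pow_const 2).aestronglyMeasurable).symm
      rw [h1, hlaw k, Measure.integral_compProd hg2int]
      have hin : ∀ x, ∫ y, g (x, y) ^ 2 ∂κ x = ψ j x ^ 2 * (Kψ2 i x - Kψ i x ^ 2) := by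
        intro x
        have e : (fun y => g (x, y) ^ 2)
            = fun y => ((ψ i y ^ 2 - (2 * Kψ i x) * ψ i y) + Kψ i x ^ 2) * ψ j x ^ 2 := by
          funext y
          show ((Kψ i x - ψ i y) * ψ j x) ^ 2 = _
          ring
        have hsubint : Integrable (fun y => ψ i y ^ 2 - (2 * Kψ i x) * ψ i y) (κ x) :=
          (hint_ψ2 i x).sub ((hint_ψ i x).const_mul _)
        have hmulint : Integrable (fun y => (2 * Kψ i x) * ψ i y) (κ x) :=
          (hint_ψ i x).const_mul _
        rw [e, integral_mul_const, integral_add hsubint (integrable_const _),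
          integral_sub (hint_ψ2 i x) hmulint, integral_const_mul, integral_const]
        rw [← hKψ i x, ← hKψ2 i x]
        simp
        ring
      simp_rw [hin]
      exact hbound i j k
    have hpair : Set.Pairwise ↑(Finset.univ : Finset (Fin T))
        fun k l => IndepFun (Z k) (Z l) P := by
      intro k _ l _ hkl
      exact (hindep.indepFun hkl).comp hg_meas hg_meas
    have hSmem : MemLp (∑ k, Z k) 2 P := memLp_finset_sum' _ fun k _ => hZ_mem k
    have hES : ∫ ω, (∑ k, Z k) ω ∂P = 0 := by
      simp only [Finset.sum_apply]
      rw [integral_finset_sum _ fun k _ => hZ_int k]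
      simp [hEZ]
    have hS2 : ∫ ω, ((∑ k, Z k) ω) ^ 2 ∂P ≤ T * γ' := by
      have h2 : ∫ ω, ((∑ k, Z k) ω) ^ 2 ∂P = variance (∑ k, Z k) P := by
        rw [variance_eq_sub hSmem, hES]
        simp [Pi.pow_apply]
      rw [h2, IndepFun.variance_sum (fun k _ => hZ_mem k) hpair]
      have h3 : ∀ k : Fin T, variance (Z k) P ≤ γ' := by
        intro k
        rw [variance_eq_sub (hZ_mem k), hEZ k]
        simpa [Pi.pow_apply] using hEZ2 k
      calc ∑ k, variance (Z k) P ≤ ∑ _k : Fin T, γ' := Finset.sum_le_sum fun k _ => h3 k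
        _ = T * γ' := by simp [Finset.sum_const, Finset.card_univ, nsmul_eq_mul]
    have hentry : (fun ω => (KT ω i j - Khat ω i j) ^ 2)
        = fun ω => ((T : ℝ)⁻¹) ^ 2 * ((∑ k, Z k) ω) ^ 2 := by
      funext ω
      have : KT ω i j - Khat ω i j = (T : ℝ)⁻¹ * (∑ k, Z k) ω := by
        rw [hKT, hKhat, ← mul_sub, ← Finset.sum_sub_distrib]
        simp only [Finset.sum_apply]
        congr 1
        refine Finset.sum_congr rfl fun k _ => ?_
        show Kψ i (X k ω) * ψ j (X k ω) - ψ i (Y k ω) * ψ j (X k ω)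
          = (Kψ i (X k ω) - ψ i (Y k ω)) * ψ j (X k ω)
        ring
      rw [this]; ring
    constructor
    · rw [hentry]
      exact (hSmem.integrable_sq).const_mul _
    · rw [hentry, integral_const_mul]
      calc ((T : ℝ)⁻¹) ^ 2 * ∫ ω, ((∑ k, Z k) ω) ^ 2 ∂P
          ≤ ((T : ℝ)⁻¹) ^ 2 * (T * γ') :=
            mul_le_mul_of_nonneg_left hS2 (by positivity)
        _ = γ' / T := by field_simp
  -- Frobenius norm squared bound
  have hBfro : ∫ ω, frobeniusNormSq (KT ω - Khat ω) ∂P ≤ (N : ℝ) ^ 2 * γ' / T := by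
    have h1 : (fun ω => frobeniusNormSq (KT ω - Khat ω))
        = fun ω => ∑ i, ∑ j, (KT ω i j - Khat ω i j) ^ 2 := by
      funext ω; simp [frobeniusNormSq, Matrix.sub_apply]
    calc ∫ ω, frobeniusNormSq (KT ω - Khat ω) ∂P
        = ∑ i, ∑ j, ∫ ω, (KT ω i j - Khat ω i j) ^ 2 ∂P := by
          rw [h1, integral_finset_sum _ fun i _ =>
            integrable_finset_sum _ fun j _ => (key i j).1]
          exact Finset.sum_congr rfl fun i _ =>
            integral_finset_sum _ fun j _ => (key i j).1
      _ ≤ ∑ _i : Fin N, ∑ _j : Fin N, γ' / T :=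
          Finset.sum_le_sum fun i _ => Finset.sum_le_sum fun j _ => (key i j).2
      _ = (N : ℝ) ^ 2 * γ' / T := by
          simp [Finset.sum_const, Finset.card_univ, nsmul_eq_mul]
          ring
  -- Final Cauchy–Schwarz argument
  set F : Ω → ℝ := fun ω => frobeniusNorm' (KT ω - Khat ω) with hFdef
  set G : Ω → ℝ := fun ω => frobeniusNorm' (Mbar ω)⁻¹ with hGdef
  have hF_sq : ∀ ω, F ω ^ 2 = frobeniusNormSq (KT ω - Khat ω) := fun ω =>
    Real.sq_sqrt (frobeniusNormSq_nonneg _)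
  have hG_sq : ∀ ω, G ω ^ 2 = frobeniusNormSq (Mbar ω)⁻¹ := fun ω =>
    Real.sq_sqrt (frobeniusNormSq_nonneg _)
  have hF_aesm : AEStronglyMeasurable F P :=
    Real.continuous_sqrt.comp_aestronglyMeasurable hInt₁.1
  have hG_aesm : AEStronglyMeasurable G P :=
    Real.continuous_sqrt.comp_aestronglyMeasurable hInt₂.1
  have hF2int : Integrable (fun ω => F ω ^ 2) P :=
    hInt₁.congr (Filter.Eventually.of_forall fun ω => (hF_sq ω).symm)
  have hG2int : Integrable (fun ω => G ω ^ 2) P :=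
    hInt₂.congr (Filter.Eventually.of_forall fun ω => (hG_sq ω).symm)
  have hFmem : MemLp F 2 P := (memLp_two_iff_integrable_sq hF_aesm).mpr hF2int
  have hGmem : MemLp G 2 P := (memLp_two_iff_integrable_sq hG_aesm).mpr hG2int
  have hFnn : ∀ ω, 0 ≤ F ω := fun ω => frobeniusNorm'_nonneg _
  have hGnn : ∀ ω, 0 ≤ G ω := fun ω => frobeniusNorm'_nonneg _
  have hFG_int : Integrable (fun ω => F ω * G ω) P := by
    have hbint : Integrable (fun ω => 1 / 2 * (F ω ^ 2 + G ω ^ 2)) P :=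
      ((hF2int.add hG2int).const_mul (1 / 2)).congr
        (Filter.Eventually.of_forall fun ω => by simp)
    refine Integrable.mono' hbint (hF_aesm.mul hG_aesm)
      (Filter.Eventually.of_forall fun ω => ?_)
    rw [Real.norm_eq_abs, abs_mul, abs_of_nonneg (hFnn ω), abs_of_nonneg (hGnn ω)]
    nlinarith [sq_nonneg (F ω - G ω)]
  have hF2le : ∫ ω, F ω ^ 2 ∂P ≤ (N : ℝ) ^ 2 * γ' / T := by
    calc ∫ ω, F ω ^ 2 ∂P = ∫ ω, frobeniusNormSq (KT ω - Khat ω) ∂P :=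
          integral_congr_ae (Filter.Eventually.of_forall fun ω => hF_sq ω)
      _ ≤ _ := hBfro
  have hG2le : ∫ ω, G ω ^ 2 ∂P ≤ Mt := by
    calc ∫ ω, G ω ^ 2 ∂P = ∫ ω, frobeniusNormSq (Mbar ω)⁻¹ ∂P :=
          integral_congr_ae (Filter.Eventually.of_forall fun ω => hG_sq ω)
      _ ≤ _ := hMbar_bound
  have hpq : Real.HolderConjugate 2 2 := Real.HolderConjugate.two_two
  have hmem2 : ENNReal.ofReal (2 : ℝ) = 2 := by norm_num
  have hholder : ∫ ω, F ω * G ω ∂P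
      ≤ (∫ ω, F ω ^ 2 ∂P) ^ ((1 : ℝ) / 2) * (∫ ω, G ω ^ 2 ∂P) ^ ((1 : ℝ) / 2) := by
    have := integral_mul_le_Lp_mul_Lq_of_nonneg hpq
      (Filter.Eventually.of_forall fun ω => frobeniusNorm'_nonneg _ : 0 ≤ᵐ[P] F)
      (Filter.Eventually.of_forall fun ω => frobeniusNorm'_nonneg _ : 0 ≤ᵐ[P] G)
      (hmem2 ▸ hFmem) (hmem2 ▸ hGmem)
    have e2 : ∀ f : Ω → ℝ, (fun ω => f ω ^ (2 : ℝ)) = fun ω => f ω ^ (2 : ℕ) := by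
      intro f; funext ω
      rw [show (2 : ℝ) = ((2 : ℕ) : ℝ) by norm_num, Real.rpow_natCast]
    calc ∫ ω, F ω * G ω ∂P
        ≤ (∫ ω, F ω ^ (2 : ℝ) ∂P) ^ ((1:ℝ)/2) * (∫ ω, G ω ^ (2 : ℝ) ∂P) ^ ((1:ℝ)/2) := this
      _ = _ := by rw [e2 F, e2 G]
  have hintF2nn : 0 ≤ ∫ ω, F ω ^ 2 ∂P := integral_nonneg fun ω => sq_nonneg _
  have hintG2nn : 0 ≤ ∫ ω, G ω ^ 2 ∂P := integral_nonneg fun ω => sq_nonneg _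
  have hNγT : (0 : ℝ) ≤ (N : ℝ) ^ 2 * γ' / T :=
    div_nonneg (mul_nonneg (by positivity) hγ') (by positivity)
  calc ∫ ω, frobeniusNorm' (KT ω * (Mbar ω)⁻¹ - Khat ω * (Mbar ω)⁻¹) ∂P
      ≤ ∫ ω, F ω * G ω ∂P := by
        refine integral_mono hInt₃ hFG_int fun ω => ?_
        rw [← sub_mul]
        exact frobeniusNorm'_mul_le _ _
    _ ≤ (∫ ω, F ω ^ 2 ∂P) ^ ((1:ℝ)/2) * (∫ ω, G ω ^ 2 ∂P) ^ ((1:ℝ)/2) := hholder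
    _ ≤ ((N : ℝ) ^ 2 * γ' / T) ^ ((1:ℝ)/2) * Mt ^ ((1:ℝ)/2) := by
        refine mul_le_mul (Real.rpow_le_rpow hintF2nn hF2le (by norm_num))
          (Real.rpow_le_rpow hintG2nn hG2le (by norm_num))
          (Real.rpow_nonneg hintG2nn _) (Real.rpow_nonneg hNγT _)
    _ = Real.sqrt ((N : ℝ) ^ 2 * γ' * Mt / T) := by
        rw [← Real.sqrt_eq_rpow, ← Real.sqrt_eq_rpow, ← Real.sqrt_mul hNγT]
        congr 1
        ring
end
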